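/- Let L be the rank-4 lattice with Gram matrix having 0 on the diagonal and 2 in every off-diagonal entry (in basis L₁, L₂, L₃, L₄). Let g be an isometry of L fixing L₁, L₂, L₃. Writing g(L₄) = aL₁ + bL₂ + cL₃ + dL₄ with integers a,b,c,d, then a = b = c, d = 1 − 2a, and either (a,d) = (0,1) (so g is the identity) or d = −1 and a = 1. -/

import Mathlib

open Matrix

/-- An isometry `g` of the rank-4 lattice with Gram matrix 0 on the diagonal and 2
off-diagonal, fixing `L₁, L₂, L₃`, with `g(L₄) = aL₁ + bL₂ + cL₃ + dL₄`, satisfies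
`a = b = c`, `d = 1 − 2a`, and either `(a,d) = (0,1)` (so `g` is the identity) or
`d = −1` and `a = 1`. -/
theorem stmt5 (g : (Fin 4 → ℤ) ≃ₗ[ℤ] (Fin 4 → ℤ))
    (Q : Matrix (Fin 4) (Fin 4) ℤ)
    (hQ : Q = Matrix.of fun i j => if i = j then 0 else 2)
    (hg : ∀ u v : Fin 4 → ℤ,
      dotProduct (g u) (Q.mulVec (g v)) = dotProduct u (Q.mulVec v))
    (h1 : g (Pi.single 0 1) = Pi.single 0 1)
    (h2 : g (Pi.single 1 1) = Pi.single 1 1)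
    (h3 : g (Pi.single 2 1) = Pi.single 2 1)
    (a b c d : ℤ) (h4 : g (Pi.single 3 1) = ![a, b, c, d]) :
    a = b ∧ b = c ∧ d = 1 - 2 * a ∧
      ((a = 0 ∧ d = 1 ∧ g = LinearEquiv.refl ℤ (Fin 4 → ℤ)) ∨ (d = -1 ∧ a = 1)) := by
  have e1 := hg (Pi.single 3 1) (Pi.single 0 1)
  have e2 := hg (Pi.single 3 1) (Pi.single 1 1)
  have e3 := hg (Pi.single 3 1) (Pi.single 2 1)
  have e4 := hg (Pi.single 3 1) (Pi.single 3 1)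
  simp only [h1, h2, h3, h4, hQ, dotProduct, Matrix.mulVec, Fin.sum_univ_four,
    Matrix.of_apply, Pi.single_apply, Matrix.cons_val_zero, Matrix.cons_val_one,
    Matrix.head_cons, Matrix.cons_val_two, Matrix.tail_cons, Matrix.cons_val_three] at e1 e2 e3 e4
  simp (config := { decide := true }) at e1 e2 e3 e4
  have hab : a = b := by linarith
  have hbc : b = c := by linarith
  have hd : d = 1 - 2 * a := by linarith
  refine ⟨hab, hbc, hd, ?_⟩
  have ha : a = 0 ∨ a = 1 := by
    have h12 : 12 * (a * (a - 1)) = 0 := by subst hab hbc hd; linear_combination -e4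
    have : a * (a - 1) = 0 := by
      rcases mul_eq_zero.mp h12 with h | h
      · omega
      · exact h
    rcases mul_eq_zero.mp this with h | h
    · exact Or.inl h
    · exact Or.inr (by linarith)
  rcases ha with h | h
  · refine Or.inl ⟨h, by omega, ?_⟩
    have h4' : g (Pi.single 3 1) = Pi.single 3 1 := by
      rw [h4]
      funext i
      fin_cases i <;> simp [Pi.single_apply] <;> omega
    refine LinearEquiv.ext fun v => ?_
    have hv : v = v 0 • Pi.single 0 1 + v 1 • Pi.single 1 1 + v 2 • Pi.single 2 1
        + v 3 • (Pi.single 3 1 : Fin 4 → ℤ) := by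
      funext i
      fin_cases i <;> simp [Pi.single_apply]
    show g v = v
    conv_lhs => rw [hv]
    rw [map_add, map_add, map_add, LinearEquiv.map_smul, LinearEquiv.map_smul,
      LinearEquiv.map_smul, LinearEquiv.map_smul, h1, h2, h3, h4', ← hv]
  · exact Or.inr ⟨by omega, h⟩
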